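/- Let n, m ≥ 1, let A : ℕ → Matrix (Fin n) (Fin n) ℂ be unitary matrices, let z : ℕ → (Fin n → ℂ) satisfy z(t+1) = A(t) z(t), let R be an m × n complex matrix, and define y(t) = R z(t). Fix a stride k ≥ 1 and memory length ℓ with ℓ·k ≤ t, and let M(t) be the (ℓ+1)m × n block matrix whose j-th block row (j = 0, …, ℓ) is R ⬝ A(t−jk)ᴴ ⬝ ⋯ ⬝ A(t−1)ᴴ. If M(t)ᴴ M(t) is invertible (i.e., M(t) has full column rank n), then y(t+1) = R ⬝ A(t) ⬝ (M(t)ᴴ M(t))⁻¹ ⬝ M(t)ᴴ ⬝ Y_ℓ(t), where Y_ℓ(t) is the vertical stacking of y(t), y(t−k), …, y(t−ℓk). In other words, the reduced quantity satisfies a closed, linear, time-delayed evolution equation whose coefficient is R A(t) M(t)⁺ with M(t)⁺ = (M(t)ᴴM(t))⁻¹M(t)ᴴ the left inverse (Moore–Penrose pseudoinverse) of M(t). -/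
import Mathlib

open Matrix

lemma prod_apply_z (n : ℕ) (A : ℕ → Matrix (Fin n) (Fin n) ℂ)
    (hA : ∀ t, (A t)ᴴ * A t = 1)
    (z : ℕ → Fin n → ℂ)
    (hz : ∀ t, z (t + 1) = A t *ᵥ z t) :
    ∀ (a t : ℕ), a ≤ t →
      ((List.range a).map (fun s => (A (t - a + s))ᴴ)).prod *ᵥ z t = z (t - a) := by
  intro a
  induction a with
  | zero => intro t _; simp
  | succ a ih =>
    intro t ht
    obtain ⟨u, rfl⟩ : ∃ u, t = u + 1 := ⟨t - 1, by omega⟩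
    have hq : u + 1 - (a + 1) = u - a := by omega
    have h1 : (List.range (a+1)).map (fun s => (A (u + 1 - (a+1) + s))ᴴ)
        = ((List.range a).map (fun s => (A (u - a + s))ᴴ)) ++ [(A u)ᴴ] := by
      rw [List.range_succ, List.map_append]
      congr 1
      · simp [hq]
      · have hq2 : u - a + a = u := by omega
        simp [hq, hq2]
    rw [h1, List.prod_append, List.prod_singleton, ← Matrix.mulVec_mulVec]
    have h2 : (A u)ᴴ *ᵥ z (u + 1) = z u := by
      rw [hz u, Matrix.mulVec_mulVec, hA u, Matrix.one_mulVec]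
    rw [h2, ih u (by omega), hq]

/-- If the stacked memory matrix `M t` has full column rank
(i.e. `M tᴴ * M t` is invertible), then the reduced quantity `y` satisfies the
closed, linear, time-delayed evolution equation
`y (t+1) = R ⬝ A t ⬝ (M tᴴ M t)⁻¹ ⬝ M tᴴ *ᵥ Y_ℓ t`. -/
theorem statement2 (n m : ℕ) (hn : 1 ≤ n) (hm : 1 ≤ m)
    (A : ℕ → Matrix (Fin n) (Fin n) ℂ)
    (hA : ∀ t, (A t)ᴴ * A t = 1)
    (z : ℕ → Fin n → ℂ)
    (hz : ∀ t, z (t + 1) = A t *ᵥ z t)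
    (R : Matrix (Fin m) (Fin n) ℂ)
    (y : ℕ → Fin m → ℂ)
    (hy : ∀ t, y t = R *ᵥ z t)
    (k : ℕ) (hk : 1 ≤ k)
    (t ℓ : ℕ) (hℓ : ℓ * k ≤ t)
    (M : Matrix (Fin (ℓ + 1) × Fin m) (Fin n) ℂ)
    (hM : ∀ (j : Fin (ℓ + 1)) (i : Fin m) (c : Fin n),
      M (j, i) c =
        (R * ((List.range ((j : ℕ) * k)).map
            (fun s => (A (t - (j : ℕ) * k + s))ᴴ)).prod) i c)
    (Y : Fin (ℓ + 1) × Fin m → ℂ)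
    (hY : ∀ (j : Fin (ℓ + 1)) (i : Fin m), Y (j, i) = y (t - (j : ℕ) * k) i)
    (hfull : IsUnit (Mᴴ * M)) :
    y (t + 1) = (R * A t * (Mᴴ * M)⁻¹ * Mᴴ) *ᵥ Y := by
  -- Key: M *ᵥ z t = Y
  have hMz : M *ᵥ z t = Y := by
    funext p
    obtain ⟨j, i⟩ := p
    have hjk : (j : ℕ) * k ≤ t := le_trans (Nat.mul_le_mul_right k (by omega)) hℓ
    have hrow : (M *ᵥ z t) (j, i)
        = ((R * ((List.range ((j : ℕ) * k)).map
            (fun s => (A (t - (j : ℕ) * k + s))ᴴ)).prod) *ᵥ z t) i := by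
      simp only [Matrix.mulVec, dotProduct]
      exact Finset.sum_congr rfl fun c _ => by rw [hM j i c]
    rw [hrow, ← Matrix.mulVec_mulVec,
      prod_apply_z n A hA z hz ((j : ℕ) * k) t hjk, hY j i, hy]
  have hdet : IsUnit (Mᴴ * M).det := (Matrix.isUnit_iff_isUnit_det _).mp hfull
  have hinv : (Mᴴ * M)⁻¹ * (Mᴴ * M) = 1 := Matrix.nonsing_inv_mul _ hdet
  have hzt : ((Mᴴ * M)⁻¹ * Mᴴ) *ᵥ Y = z t := by
    rw [← hMz, Matrix.mulVec_mulVec, ← Matrix.mulVec_mulVec, Matrix.mulVec_mulVec,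
      Matrix.mul_assoc, hinv, Matrix.one_mulVec]
  calc y (t + 1) = R *ᵥ (A t *ᵥ z t) := by rw [hy, hz]
    _ = (R * A t * (Mᴴ * M)⁻¹ * Mᴴ) *ᵥ Y := by
        rw [← hzt, Matrix.mulVec_mulVec, Matrix.mulVec_mulVec, Matrix.mul_assoc,
          Matrix.mul_assoc, Matrix.mul_assoc]
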